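/- arXiv:2209.09321 — 2 statements merged into one kernel-verified Lean document; each statement's English description precedes it below -/
import Mathlib

section
/- Let A ∈ ℝ^{n×n}, let η ≥ 1 be an integer, let H = {c_h + G_h·α : α ∈ [-1,1]^p} ⊆ ℝ^n be a zonotope, and let ũ ∈ ℝ^n. For Δt > 0 define the scalar intervals I_i(Δt) = [ (i^{−i/(i−1)} − i^{−1/(i−1)})·Δt^i , 0 ] for integers i ≥ 2, the matrix sets F_x(Δt) = { Σ_{i=2}^{η} τ_i·A^i/i! + R : τ_i ∈ I_i(Δt), |R| ≤ E(Δt,η) entrywise } and F_u(Δt) = { Σ_{i=2}^{η+1} τ_i·A^{i−1}/i! + R·Δt : τ_i ∈ I_i(Δt), |R| ≤ E(Δt,η) entrywise }, and the curvature enclosure set C(Δt) = { M·x + N·ũ : M ∈ F_x(Δt), N ∈ F_u(Δt), x ∈ H }. Define ε_hom(Δt) = 2·err(C(Δt)) + √p·‖(e^{A·Δt} − I)·G_h‖₂, where ‖·‖₂ is the spectral norm. Then ε_hom(Δt) → 0 as Δt → 0⁺ and ε_hom(Δt) = O(Δt) as Δt → 0⁺, i.e., there exist constants c > 0 and δ >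 0 with ε_hom(Δt) ≤ c·Δt for all Δt ∈ (0,δ). -/
open scoped Pointwise

/-- Matrix exponential. -/
noncomputable def mexp {n : ℕ} (A : Matrix (Fin n) (Fin n) ℝ) : Matrix (Fin n) (Fin n) ℝ :=
  NormedSpace.exp A

/-- Matrix-vector multiplication on Euclidean space. -/
noncomputable def mvE {m n : ℕ} (M : Matrix (Fin m) (Fin n) ℝ)
    (x : EuclideanSpace ℝ (Fin n)) : EuclideanSpace ℝ (Fin m) :=
  Matrix.toEuclideanLin M x

/-- Image of a set under a matrix: M·S = {M·s : s ∈ S}. -/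
noncomputable def imgM {m n : ℕ} (M : Matrix (Fin m) (Fin n) ℝ)
    (S : Set (EuclideanSpace ℝ (Fin n))) : Set (EuclideanSpace ℝ (Fin m)) :=
  mvE M '' S

/-- Zonotope with center `c` and generator matrix `G`. -/
noncomputable def zono {n p : ℕ} (c : EuclideanSpace ℝ (Fin n))
    (G : Matrix (Fin n) (Fin p) ℝ) : Set (EuclideanSpace ℝ (Fin n)) :=
  {x | ∃ α : EuclideanSpace ℝ (Fin p), (∀ i, α i ∈ Set.Icc (-1 : ℝ) 1) ∧ x = c + mvE G α}

/-- Linear combination of two sets. -/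
def linComb {n : ℕ} (S1 S2 : Set (EuclideanSpace ℝ (Fin n))) :
    Set (EuclideanSpace ℝ (Fin n)) :=
  {x | ∃ s1 ∈ S1, ∃ s2 ∈ S2, ∃ lam ∈ Set.Icc (0 : ℝ) 1, x = lam • s1 + (1 - lam) • s2}

/-- Tightest axis-aligned interval enclosure of a set. -/
noncomputable def box {n : ℕ} (S : Set (EuclideanSpace ℝ (Fin n))) :
    Set (EuclideanSpace ℝ (Fin n)) :=
  {x | ∀ i, x i ∈ Set.Icc (sInf ((fun y => y i) '' S)) (sSup ((fun y => y i) '' S))}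

/-- Radius of the smallest origin-centered enclosing hypersphere. -/
noncomputable def rad {n : ℕ} (S : Set (EuclideanSpace ℝ (Fin n))) : ℝ :=
  sSup ((fun x => ‖x‖) '' S)

/-- err(S) = rad(box(S)). -/
noncomputable def err {n : ℕ} (S : Set (EuclideanSpace ℝ (Fin n))) : ℝ := rad (box S)

/-- Spectral norm (operator 2-norm) of a matrix. -/
noncomputable def specNorm {m n : ℕ} (M : Matrix (Fin m) (Fin n) ℝ) : ℝ :=
  ‖LinearMap.toContinuousLinearMap (Matrix.toEuclideanLin M)‖

/-- Particular solution set P_U(t). -/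
noncomputable def PU {n : ℕ} (U0 : Set (EuclideanSpace ℝ (Fin n)))
    (A : Matrix (Fin n) (Fin n) ℝ) (t : ℝ) : Set (EuclideanSpace ℝ (Fin n)) :=
  {x | ∃ u : ℝ → EuclideanSpace ℝ (Fin n), Measurable u ∧ (∀ θ ∈ Set.Icc 0 t, u θ ∈ U0) ∧
    x = ∫ θ in (0 : ℝ)..t, mvE (mexp ((t - θ) • A)) (u θ)}

/-- Entrywise integral ∫₀^t e^{A·σ} dσ of the matrix exponential. -/
noncomputable def intExp {n : ℕ} (A : Matrix (Fin n) (Fin n) ℝ) (t : ℝ) :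
    Matrix (Fin n) (Fin n) ℝ :=
  Matrix.of fun i j => ∫ σ in (0 : ℝ)..t, mexp (σ • A) i j

/-- Entrywise absolute value of a matrix. -/
def entAbs {m n : ℕ} (M : Matrix (Fin m) (Fin n) ℝ) : Matrix (Fin m) (Fin n) ℝ :=
  Matrix.of fun i j => |M i j|

/-- Exponential remainder matrix E(Δt,η). -/
noncomputable def Eexp {n : ℕ} (A : Matrix (Fin n) (Fin n) ℝ) (dt : ℝ) (η : ℕ) :
    Matrix (Fin n) (Fin n) ℝ :=
  mexp (dt • entAbs A) -
    ∑ i ∈ Finset.range (η + 1), ((Nat.factorial i : ℝ)⁻¹) • (dt • entAbs A) ^ i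

/-- Ã_i = A^i·Δt^{i+1}/(i+1)!. -/
noncomputable def Atilde {n : ℕ} (A : Matrix (Fin n) (Fin n) ℝ) (dt : ℝ) (i : ℕ) :
    Matrix (Fin n) (Fin n) ℝ :=
  (dt ^ (i + 1) / (Nat.factorial (i + 1) : ℝ)) • A ^ i

/-- D(Δt) = {Δt·M·u : |M| ≤ E(Δt,η) entrywise, u ∈ U₀}. -/
noncomputable def Dset {n : ℕ} (A : Matrix (Fin n) (Fin n) ℝ) (dt : ℝ) (η : ℕ)
    (U0 : Set (EuclideanSpace ℝ (Fin n))) : Set (EuclideanSpace ℝ (Fin n)) :=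
  {x | ∃ M : Matrix (Fin n) (Fin n) ℝ, (∀ i j, |M i j| ≤ Eexp A dt η i j) ∧
    ∃ u ∈ U0, x = dt • mvE M u}

/-- P̂(Δt) = Ã_0·U₀ ⊕ … ⊕ Ã_η·U₀ ⊕ D(Δt). -/
noncomputable def PhatSet {n : ℕ} (A : Matrix (Fin n) (Fin n) ℝ) (dt : ℝ) (η : ℕ)
    (U0 : Set (EuclideanSpace ℝ (Fin n))) : Set (EuclideanSpace ℝ (Fin n)) :=
  (∑ i ∈ Finset.range (η + 1), imgM (Atilde A dt i) U0) + Dset A dt η U0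

/-- One-step accumulating error bound ε̂(Δt). -/
noncomputable def ehatStep {n : ℕ} (A : Matrix (Fin n) (Fin n) ℝ) (t : ℝ) (η : ℕ)
    (U0 : Set (EuclideanSpace ℝ (Fin n))) (dt : ℝ) : ℝ :=
  err (imgM (mexp (t • A)) (imgM (∑ i ∈ Finset.Icc 1 η, Atilde A dt i) U0 + Dset A dt η U0)) +
  err (imgM (mexp (t • A)) ((∑ i ∈ Finset.Icc 1 η, imgM (Atilde A dt i) U0) + Dset A dt η U0))

/-- Scalar interval I_i(Δt). -/
noncomputable def Iint (i : ℕ) (dt : ℝ) : Set ℝ :=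
  Set.Icc (((i : ℝ) ^ (-(i : ℝ) / ((i : ℝ) - 1)) - (i : ℝ) ^ (-(1 : ℝ) / ((i : ℝ) - 1))) * dt ^ i) 0

/-- Interval matrix F_x(Δt). -/
noncomputable def Fx {n : ℕ} (A : Matrix (Fin n) (Fin n) ℝ) (η : ℕ) (dt : ℝ) :
    Set (Matrix (Fin n) (Fin n) ℝ) :=
  {M | ∃ τ : ℕ → ℝ, (∀ i ∈ Finset.Icc 2 η, τ i ∈ Iint i dt) ∧
    ∃ R : Matrix (Fin n) (Fin n) ℝ, (∀ i j, |R i j| ≤ Eexp A dt η i j) ∧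
    M = (∑ i ∈ Finset.Icc 2 η, (τ i / (Nat.factorial i : ℝ)) • A ^ i) + R}

/-- Interval matrix F_u(Δt). -/
noncomputable def Fu {n : ℕ} (A : Matrix (Fin n) (Fin n) ℝ) (η : ℕ) (dt : ℝ) :
    Set (Matrix (Fin n) (Fin n) ℝ) :=
  {N | ∃ τ : ℕ → ℝ, (∀ i ∈ Finset.Icc 2 (η + 1), τ i ∈ Iint i dt) ∧
    ∃ R : Matrix (Fin n) (Fin n) ℝ, (∀ i j, |R i j| ≤ Eexp A dt η i j) ∧
    N = (∑ i ∈ Finset.Icc 2 (η + 1), (τ i / (Nat.factorial i : ℝ)) • A ^ (i - 1)) + dt • R}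

/-- Curvature enclosure set C(Δt). -/
noncomputable def Cset {n p : ℕ} (A : Matrix (Fin n) (Fin n) ℝ) (η : ℕ) (dt : ℝ)
    (ch : EuclideanSpace ℝ (Fin n)) (Gh : Matrix (Fin n) (Fin p) ℝ)
    (utld : EuclideanSpace ℝ (Fin n)) : Set (EuclideanSpace ℝ (Fin n)) :=
  {y | ∃ M ∈ Fx A η dt, ∃ N ∈ Fu A η dt, ∃ x ∈ zono ch Gh, y = mvE M x + mvE N utld}

/-- ε_hom(Δt). -/
noncomputable def ehom {n p : ℕ} (A : Matrix (Fin n) (Fin n) ℝ) (η : ℕ)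
    (ch : EuclideanSpace ℝ (Fin n)) (Gh : Matrix (Fin n) (Fin p) ℝ)
    (utld : EuclideanSpace ℝ (Fin n)) (dt : ℝ) : ℝ :=
  2 * err (Cset A η dt ch Gh utld) + Real.sqrt p * specNorm ((mexp (dt • A) - 1) * Gh)

/-- ε_U(Δt) = err(e^{A·t}·P̂(Δt)). -/
noncomputable def errPhat {n : ℕ} (A : Matrix (Fin n) (Fin n) ℝ) (t : ℝ) (η : ℕ)
    (U0 : Set (EuclideanSpace ℝ (Fin n))) (dt : ℝ) : ℝ :=
  err (imgM (mexp (t • A)) (PhatSet A dt η U0))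
section AuxLemmas

open Finset

/-- Entrywise 1-norm of a matrix. -/
noncomputable def entSum {m n : ℕ} (M : Matrix (Fin m) (Fin n) ℝ) : ℝ :=
  ∑ i, ∑ j, |M i j|

lemma entSum_nonneg {m n : ℕ} (M : Matrix (Fin m) (Fin n) ℝ) : 0 ≤ entSum M := by
  unfold entSum; positivity

lemma colSum_le_entSum {m n : ℕ} (M : Matrix (Fin m) (Fin n) ℝ) (k : Fin n) :
    (∑ i, |M i k|) ≤ entSum M :=
  Finset.sum_le_sum fun i _ =>
    Finset.single_le_sum (f := fun j => |M i j|) (fun _ _ => abs_nonneg _) (Finset.mem_univ k)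

lemma rowSum_le_entSum {m n : ℕ} (M : Matrix (Fin m) (Fin n) ℝ) (i : Fin m) :
    (∑ j, |M i j|) ≤ entSum M :=
  Finset.single_le_sum (f := fun i' => ∑ j, |M i' j|)
    (fun _ _ => Finset.sum_nonneg fun _ _ => abs_nonneg _) (Finset.mem_univ i)

lemma abs_entry_le_entSum {m n : ℕ} (M : Matrix (Fin m) (Fin n) ℝ) (i : Fin m) (j : Fin n) :
    |M i j| ≤ entSum M :=
  (Finset.single_le_sum (f := fun j' => |M i j'|) (fun _ _ => abs_nonneg _)
    (Finset.mem_univ j)).trans (rowSum_le_entSum M i)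

lemma entSum_le_of_bound {m n : ℕ} (M : Matrix (Fin m) (Fin n) ℝ) {C : ℝ}
    (h : ∀ i j, |M i j| ≤ C) : entSum M ≤ (m : ℝ) * n * C := by
  calc entSum M ≤ ∑ _i : Fin m, ∑ _j : Fin n, C :=
        Finset.sum_le_sum fun i _ => Finset.sum_le_sum fun j _ => h i j
    _ = (m : ℝ) * n * C := by simp [Finset.sum_const, mul_assoc]

lemma entSum_smul {m n : ℕ} (c : ℝ) (M : Matrix (Fin m) (Fin n) ℝ) :
    entSum (c • M) = |c| * entSum M := by
  simp [entSum, Matrix.smul_apply, smul_eq_mul, abs_mul, Finset.mul_sum]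

lemma entSum_add_le {m n : ℕ} (M N : Matrix (Fin m) (Fin n) ℝ) :
    entSum (M + N) ≤ entSum M + entSum N := by
  unfold entSum
  rw [← Finset.sum_add_distrib]
  refine Finset.sum_le_sum fun i _ => ?_
  rw [← Finset.sum_add_distrib]
  exact Finset.sum_le_sum fun j _ => abs_add_le _ _

lemma entSum_finsum_le {m n : ℕ} {ι : Type*} (s : Finset ι)
    (f : ι → Matrix (Fin m) (Fin n) ℝ) :
    entSum (∑ k ∈ s, f k) ≤ ∑ k ∈ s, entSum (f k) := by
  unfold entSum
  have h1 : ∀ i j, |(∑ k ∈ s, f k) i j| ≤ ∑ k ∈ s, |f k i j| := by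
    intro i j
    rw [Matrix.sum_apply]
    exact Finset.abs_sum_le_sum_abs _ _
  calc (∑ i, ∑ j, |(∑ k ∈ s, f k) i j|) ≤ ∑ i, ∑ j, ∑ k ∈ s, |f k i j| :=
        Finset.sum_le_sum fun i _ => Finset.sum_le_sum fun j _ => h1 i j
    _ = ∑ i, ∑ k ∈ s, ∑ j, |f k i j| := Finset.sum_congr rfl fun i _ => Finset.sum_comm
    _ = ∑ k ∈ s, ∑ i, ∑ j, |f k i j| := Finset.sum_comm

lemma entSum_mul_le {m n q : ℕ} (M : Matrix (Fin m) (Fin n) ℝ) (N : Matrix (Fin n) (Fin q) ℝ) :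
    entSum (M * N) ≤ entSum M * entSum N := by
  have h1 : entSum (M * N) ≤ ∑ k : Fin n, (∑ i, |M i k|) * (∑ j, |N k j|) := by
    unfold entSum
    calc (∑ i, ∑ j, |(M * N) i j|) ≤ ∑ i, ∑ j, ∑ k, |M i k| * |N k j| := by
          refine Finset.sum_le_sum fun i _ => Finset.sum_le_sum fun j _ => ?_
          rw [Matrix.mul_apply]
          exact (Finset.abs_sum_le_sum_abs _ _).trans (le_of_eq (by simp [abs_mul]))
      _ = ∑ i, ∑ k, ∑ j, |M i k| * |N k j| := Finset.sum_congr rfl fun i _ => Finset.sum_comm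
      _ = ∑ k, ∑ i, ∑ j, |M i k| * |N k j| := Finset.sum_comm
      _ = ∑ k : Fin n, (∑ i, |M i k|) * (∑ j, |N k j|) := by
          refine Finset.sum_congr rfl fun k _ => ?_
          rw [Finset.sum_mul]
          exact Finset.sum_congr rfl fun i _ => (Finset.mul_sum _ _ _).symm
  refine h1.trans ?_
  calc (∑ k : Fin n, (∑ i, |M i k|) * (∑ j, |N k j|))
      ≤ ∑ k : Fin n, entSum M * (∑ j, |N k j|) := by
        refine Finset.sum_le_sum fun k _ => ?_
        exact mul_le_mul_of_nonneg_right (colSum_le_entSum M k)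
          (Finset.sum_nonneg fun _ _ => abs_nonneg _)
    _ = entSum M * entSum N := by rw [← Finset.mul_sum]; rfl

lemma abs_entry_pow_le {n : ℕ} (A : Matrix (Fin n) (Fin n) ℝ) (k : ℕ) (i j : Fin n) :
    |(A ^ k) i j| ≤ (1 + entSum A) ^ k := by
  induction k generalizing i j with
  | zero =>
    simp only [pow_zero, Matrix.one_apply]
    split <;> simp
  | succ k ih =>
    rw [pow_succ]
    calc |(A ^ k * A) i j| ≤ ∑ l, |(A ^ k) i l| * |A l j| := by
          rw [Matrix.mul_apply]
          exact (Finset.abs_sum_le_sum_abs _ _).trans (le_of_eq (by simp [abs_mul]))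
      _ ≤ ∑ l, (1 + entSum A) ^ k * |A l j| :=
          Finset.sum_le_sum fun l _ =>
            mul_le_mul_of_nonneg_right (ih i l) (abs_nonneg _)
      _ = (1 + entSum A) ^ k * ∑ l, |A l j| := by rw [Finset.mul_sum]
      _ ≤ (1 + entSum A) ^ k * (1 + entSum A) := by
          refine mul_le_mul_of_nonneg_left ?_ (pow_nonneg (by linarith [entSum_nonneg A]) k)
          exact (colSum_le_entSum A j).trans (by linarith [entSum_nonneg A])
      _ = (1 + entSum A) ^ (k + 1) := (pow_succ _ _).symm

lemma mvE_apply {m n : ℕ} (M : Matrix (Fin m) (Fin n) ℝ) (x : EuclideanSpace ℝ (Fin n))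
    (i : Fin m) : mvE M x i = ∑ j, M i j * x j := by
  simp [mvE, Matrix.toEuclideanLin_apply, Matrix.mulVec, dotProduct]

lemma coord_abs_le_norm {n : ℕ} (x : EuclideanSpace ℝ (Fin n)) (i : Fin n) :
    |x i| ≤ ‖x‖ := by
  rw [EuclideanSpace.norm_eq]
  have h := Finset.single_le_sum (f := fun j => ‖x j‖ ^ 2) (fun _ _ => sq_nonneg _)
    (Finset.mem_univ i)
  calc |x i| = Real.sqrt (‖x i‖ ^ 2) := by
        rw [Real.sqrt_sq (norm_nonneg _)]; exact (Real.norm_eq_abs _).symm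
    _ ≤ _ := Real.sqrt_le_sqrt h

lemma norm_mvE_le {m n : ℕ} (M : Matrix (Fin m) (Fin n) ℝ) (x : EuclideanSpace ℝ (Fin n)) :
    ‖mvE M x‖ ≤ entSum M * ‖x‖ := by
  have key : ∀ i, ‖mvE M x i‖ ≤ (∑ j, |M i j|) * ‖x‖ := by
    intro i
    rw [Real.norm_eq_abs, mvE_apply]
    calc |∑ j, M i j * x j| ≤ ∑ j, |M i j| * |x j| :=
          (Finset.abs_sum_le_sum_abs _ _).trans (le_of_eq (by simp [abs_mul]))
      _ ≤ ∑ j, |M i j| * ‖x‖ := Finset.sum_le_sum fun j _ =>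
          mul_le_mul_of_nonneg_left (coord_abs_le_norm x j) (abs_nonneg _)
      _ = (∑ j, |M i j|) * ‖x‖ := (Finset.sum_mul _ _ _).symm
  rw [EuclideanSpace.norm_eq]
  have h2 : (∑ i, ‖mvE M x i‖ ^ 2) ≤ (entSum M * ‖x‖) ^ 2 := by
    calc (∑ i, ‖mvE M x i‖ ^ 2) ≤ ∑ i, ((∑ j, |M i j|) * ‖x‖) ^ 2 :=
          Finset.sum_le_sum fun i _ => by
            have h0 : (0:ℝ) ≤ ‖mvE M x i‖ := norm_nonneg _
            nlinarith [key i]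
      _ = (∑ i, (∑ j, |M i j|) ^ 2) * ‖x‖ ^ 2 := by
          rw [Finset.sum_mul]; exact Finset.sum_congr rfl fun i _ => mul_pow _ _ _
      _ ≤ (∑ i, ∑ j, |M i j|) ^ 2 * ‖x‖ ^ 2 := by
          refine mul_le_mul_of_nonneg_right ?_ (sq_nonneg _)
          exact Finset.sum_sq_le_sq_sum_of_nonneg fun i _ =>
            Finset.sum_nonneg fun _ _ => abs_nonneg _
      _ = (entSum M * ‖x‖) ^ 2 := by rw [mul_pow]; rfl
  calc Real.sqrt (∑ i, ‖mvE M x i‖ ^ 2) ≤ Real.sqrt ((entSum M * ‖x‖) ^ 2) :=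
        Real.sqrt_le_sqrt h2
    _ = entSum M * ‖x‖ := Real.sqrt_sq (mul_nonneg (entSum_nonneg M) (norm_nonneg x))

lemma specNorm_le_entSum {m n : ℕ} (M : Matrix (Fin m) (Fin n) ℝ) :
    specNorm M ≤ entSum M := by
  refine ContinuousLinearMap.opNorm_le_bound _ (entSum_nonneg M) fun x => ?_
  simpa [mvE] using norm_mvE_le M x

lemma err_nonneg {n : ℕ} (S : Set (EuclideanSpace ℝ (Fin n))) : 0 ≤ err S := by
  refine Real.sSup_nonneg ?_
  rintro x ⟨y, -, rfl⟩
  exact norm_nonneg y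

lemma err_le_of_bound {n : ℕ} (S : Set (EuclideanSpace ℝ (Fin n))) {r : ℝ} (hr : 0 ≤ r)
    (h : ∀ y ∈ S, ‖y‖ ≤ r) : err S ≤ Real.sqrt n * r := by
  have hbox : ∀ z ∈ box S, ‖z‖ ≤ Real.sqrt n * r := by
    intro z hz
    have hcoord : ∀ i, |z i| ≤ r := by
      intro i
      have hzi := hz i
      rcases Set.eq_empty_or_nonempty S with hS | ⟨s, hs⟩
      · rw [hS] at hzi
        simp only [Set.image_empty, Real.sInf_empty, Real.sSup_empty] at hzi
        have : z i = 0 := le_antisymm hzi.2 hzi.1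
        rw [this]; simpa using hr
      · set T := (fun y => y i) '' S with hT
        have hTne : T.Nonempty := ⟨s i, s, hs, rfl⟩
        have hub : ∀ t ∈ T, t ≤ r := by
          rintro t ⟨y, hy, rfl⟩
          exact (abs_le.mp ((coord_abs_le_norm y i).trans (h y hy))).2
        have hlb : ∀ t ∈ T, -r ≤ t := by
          rintro t ⟨y, hy, rfl⟩
          exact (abs_le.mp ((coord_abs_le_norm y i).trans (h y hy))).1
        have h1 : z i ≤ r := hzi.2.trans (csSup_le hTne hub)
        have h2 : -r ≤ z i := (le_csInf hTne hlb).trans hzi.1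
        exact abs_le.mpr ⟨h2, h1⟩
    calc ‖z‖ = Real.sqrt (∑ i, ‖z i‖ ^ 2) := EuclideanSpace.norm_eq z
      _ ≤ Real.sqrt (∑ _i : Fin n, r ^ 2) := by
          refine Real.sqrt_le_sqrt (Finset.sum_le_sum fun i _ => ?_)
          rw [Real.norm_eq_abs]
          exact sq_le_sq' (by linarith [abs_nonneg (z i)]) (hcoord i)
      _ = Real.sqrt n * r := by
          rw [Finset.sum_const, Finset.card_univ, Fintype.card_fin, nsmul_eq_mul,
            Real.sqrt_mul (by positivity), Real.sqrt_sq hr]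
  refine Real.sSup_le ?_ (by positivity)
  rintro x ⟨z, hzb, rfl⟩
  exact hbox z hzb

lemma entry_series_summable {n : ℕ} (B : Matrix (Fin n) (Fin n) ℝ) (dt : ℝ) (i j : Fin n) :
    Summable (fun k => ((k.factorial : ℝ))⁻¹ * (dt ^ k * (B ^ k) i j)) := by
  refine Summable.of_norm_bounded (g := fun k => (|dt| * (1 + entSum B)) ^ k / k.factorial)
    (Real.summable_pow_div_factorial _) fun k => ?_
  have hB : (0:ℝ) ≤ entSum B := entSum_nonneg B
  show |((k.factorial : ℝ))⁻¹ * (dt ^ k * (B ^ k) i j)| ≤ (|dt| * (1 + entSum B)) ^ k / k.factorial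
  rw [abs_mul, abs_mul, abs_inv, abs_pow, Nat.abs_cast, div_eq_inv_mul]
  refine mul_le_mul_of_nonneg_left ?_ (by positivity)
  rw [mul_pow]
  exact mul_le_mul_of_nonneg_left (abs_entry_pow_le B k i j) (by positivity)

lemma matrix_series_summable {n : ℕ} (B : Matrix (Fin n) (Fin n) ℝ) (dt : ℝ) :
    Summable (fun k => ((k.factorial : ℝ))⁻¹ • (dt • B) ^ k) := by
  have : ∀ (i j : Fin n), Summable fun k => (((k.factorial : ℝ))⁻¹ • (dt • B) ^ k) i j := by
    intro i j
    have h := entry_series_summable B dt i j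
    refine h.congr fun k => ?_
    simp [smul_pow, Matrix.smul_apply, smul_eq_mul, mul_assoc]
  exact Pi.summable.mpr fun i => Pi.summable.mpr fun j => this i j

set_option maxHeartbeats 1000000 in
lemma mexp_entry {n : ℕ} (B : Matrix (Fin n) (Fin n) ℝ) (dt : ℝ) (i j : Fin n) :
    mexp (dt • B) i j = ∑' k, ((k.factorial : ℝ))⁻¹ * (dt ^ k * (B ^ k) i j) := by
  have hsum := matrix_series_summable B dt
  have hrow : ∀ i : Fin n, Summable fun k => (((k.factorial : ℝ))⁻¹ • (dt • B) ^ k) i :=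
    Pi.summable.mp hsum
  have hx : mexp (dt • B) = ∑' k : ℕ, ((k.factorial : ℝ))⁻¹ • (dt • B) ^ k :=
    congrFun (NormedSpace.exp_eq_tsum ℝ) _
  rw [hx]
  have h1 : (∑' k, ((k.factorial : ℝ))⁻¹ • (dt • B) ^ k) i j
      = ∑' k, (((k.factorial : ℝ))⁻¹ • (dt • B) ^ k) i j := by
    exact ((Pi.hasSum.mp ((Pi.hasSum.mp hsum.hasSum) i)) j).tsum_eq.symm
  rw [h1]
  exact tsum_congr fun k => by simp [smul_pow, Matrix.smul_apply, smul_eq_mul, mul_assoc]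

set_option maxHeartbeats 1000000 in
lemma tsum_tail_le {b : ℝ} (hb : 1 ≤ b) {dt : ℝ} (hdt : 0 < dt) (hdt1 : dt ≤ 1)
    (g : ℕ → ℝ) (hg : ∀ k, |g k| ≤ b ^ k) (m : ℕ) (hm : 1 ≤ m) :
    |∑' k, (((k + m).factorial : ℝ))⁻¹ * (dt ^ (k + m) * g (k + m))|
      ≤ dt * ∑' k, b ^ k / k.factorial := by
  have hb0 : (0:ℝ) ≤ b := by linarith
  have hFs : Summable (fun k => ((k.factorial : ℝ))⁻¹ * (dt ^ k * g k)) := by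
    refine Summable.of_norm_bounded (g := fun k => (dt * b) ^ k / k.factorial)
      (Real.summable_pow_div_factorial _) fun k => ?_
    show |((k.factorial : ℝ))⁻¹ * (dt ^ k * g k)| ≤ (dt * b) ^ k / k.factorial
    rw [abs_mul, abs_mul, abs_inv, abs_pow, Nat.abs_cast, abs_of_nonneg hdt.le,
      div_eq_inv_mul]
    refine mul_le_mul_of_nonneg_left ?_ (by positivity)
    rw [mul_pow]
    exact mul_le_mul_of_nonneg_left (hg k) (by positivity)
  have hsumb : Summable (fun k => b ^ k / (k.factorial : ℝ)) :=
    Real.summable_pow_div_factorial b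
  have htail : Summable (fun k => (((k + m).factorial : ℝ))⁻¹ * (dt ^ (k + m) * g (k + m))) :=
    (summable_nat_add_iff m).mpr hFs
  have htailb : Summable (fun k => b ^ (k + m) / ((k + m).factorial : ℝ)) :=
    (summable_nat_add_iff m).mpr hsumb
  have hterm : ∀ k, |(((k + m).factorial : ℝ))⁻¹ * (dt ^ (k + m) * g (k + m))|
      ≤ dt * (b ^ (k + m) / ((k + m).factorial : ℝ)) := by
    intro k
    rw [abs_mul, abs_mul, abs_inv, abs_pow, Nat.abs_cast, abs_of_nonneg hdt.le]
    have h1 : dt ^ (k + m) ≤ dt := by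
      calc dt ^ (k + m) ≤ dt ^ 1 := pow_le_pow_of_le_one hdt.le hdt1 (by omega)
        _ = dt := pow_one dt
    calc ((k + m).factorial : ℝ)⁻¹ * (dt ^ (k + m) * |g (k + m)|)
        ≤ ((k + m).factorial : ℝ)⁻¹ * (dt * b ^ (k + m)) := by
          refine mul_le_mul_of_nonneg_left ?_ (by positivity)
          exact mul_le_mul h1 (hg _) (abs_nonneg _) hdt.le
      _ = dt * (b ^ (k + m) / ((k + m).factorial : ℝ)) := by ring
  calc |∑' k, (((k + m).factorial : ℝ))⁻¹ * (dt ^ (k + m) * g (k + m))|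
      ≤ ∑' k, |(((k + m).factorial : ℝ))⁻¹ * (dt ^ (k + m) * g (k + m))| := by
        have hs2 : Summable fun k => ‖(((k + m).factorial : ℝ))⁻¹ * (dt ^ (k + m) * g (k + m))‖ :=
          htail.abs
        exact norm_tsum_le_tsum_norm hs2
    _ ≤ ∑' k, dt * (b ^ (k + m) / ((k + m).factorial : ℝ)) :=
        Summable.tsum_le_tsum hterm htail.abs (htailb.mul_left dt)
    _ = dt * ∑' k, b ^ (k + m) / ((k + m).factorial : ℝ) := tsum_mul_left
    _ ≤ dt * ∑' k, b ^ k / (k.factorial : ℝ) := by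
        refine mul_le_mul_of_nonneg_left ?_ hdt.le
        have hsplit := Summable.sum_add_tsum_nat_add (f := fun k => b ^ k / (k.factorial : ℝ)) m hsumb
        have hpos : (0:ℝ) ≤ ∑ i ∈ Finset.range m, b ^ i / (i.factorial : ℝ) := by positivity
        linarith

set_option maxHeartbeats 1000000 in
lemma Eexp_entry_abs_le {n : ℕ} (A : Matrix (Fin n) (Fin n) ℝ) {dt : ℝ}
    (hdt : 0 < dt) (hdt1 : dt ≤ 1) (η : ℕ) (i j : Fin n) :
    |Eexp A dt η i j| ≤ dt * ∑' k, (1 + entSum A) ^ k / (k.factorial : ℝ) := by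
  set B := entAbs A with hBdef
  have hBsum : entSum B = entSum A := by
    simp [entSum, entAbs, hBdef, abs_abs]
  have hsummable := entry_series_summable B dt i j
  have h1 : Eexp A dt η i j
      = ∑' k, (((k + (η + 1)).factorial : ℝ))⁻¹
          * (dt ^ (k + (η + 1)) * (B ^ (k + (η + 1))) i j) := by
    have h2 : Eexp A dt η i j
        = mexp (dt • B) i j
          - ∑ k ∈ Finset.range (η + 1), ((k.factorial : ℝ))⁻¹ * (dt ^ k * (B ^ k) i j) := by
      rw [Eexp, Matrix.sub_apply]
      congr 1
      rw [Matrix.sum_apply]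
      refine Finset.sum_congr rfl fun k _ => ?_
      simp [smul_pow, Matrix.smul_apply, smul_eq_mul, mul_assoc, hBdef]
    rw [h2, mexp_entry]
    have h3 := Summable.sum_add_tsum_nat_add
      (f := fun k => ((k.factorial : ℝ))⁻¹ * (dt ^ k * (B ^ k) i j)) (η + 1) hsummable
    linarith
  rw [h1, ← hBsum]
  exact tsum_tail_le (by linarith [entSum_nonneg B]) hdt hdt1 (fun k => (B ^ k) i j)
    (fun k => abs_entry_pow_le B k i j) (η + 1) (by omega)

set_option maxHeartbeats 1000000 in
lemma mexp_sub_one_entry_abs_le {n : ℕ} (A : Matrix (Fin n) (Fin n) ℝ) {dt : ℝ}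
    (hdt : 0 < dt) (hdt1 : dt ≤ 1) (i j : Fin n) :
    |(mexp (dt • A) - 1) i j| ≤ dt * ∑' k, (1 + entSum A) ^ k / (k.factorial : ℝ) := by
  have hsummable := entry_series_summable A dt i j
  have h1 : (mexp (dt • A) - 1) i j
      = ∑' k, (((k + 1).factorial : ℝ))⁻¹ * (dt ^ (k + 1) * (A ^ (k + 1)) i j) := by
    rw [Matrix.sub_apply, mexp_entry]
    have h3 := Summable.sum_add_tsum_nat_add
      (f := fun k => ((k.factorial : ℝ))⁻¹ * (dt ^ k * (A ^ k) i j)) 1 hsummable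
    have h0 : ∑ k ∈ Finset.range 1, ((k.factorial : ℝ))⁻¹ * (dt ^ k * (A ^ k) i j)
        = (1 : Matrix (Fin n) (Fin n) ℝ) i j := by
      simp
    linarith
  rw [h1]
  exact tsum_tail_le (by linarith [entSum_nonneg A]) hdt hdt1 (fun k => (A ^ k) i j)
    (fun k => abs_entry_pow_le A k i j) 1 le_rfl

lemma zono_norm_le {n p : ℕ} (ch : EuclideanSpace ℝ (Fin n)) (Gh : Matrix (Fin n) (Fin p) ℝ)
    {x : EuclideanSpace ℝ (Fin n)} (hx : x ∈ zono ch Gh) :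
    ‖x‖ ≤ ‖ch‖ + entSum Gh * Real.sqrt p := by
  obtain ⟨α, hα, rfl⟩ := hx
  have hαn : ‖α‖ ≤ Real.sqrt p := by
    rw [EuclideanSpace.norm_eq]
    have hsum : (∑ i, ‖α i‖ ^ 2) ≤ (p : ℝ) := by
      calc (∑ i, ‖α i‖ ^ 2) ≤ ∑ _i : Fin p, (1 : ℝ) := by
            refine Finset.sum_le_sum fun i _ => ?_
            have h := hα i
            rw [Real.norm_eq_abs]
            have := h.1; have := h.2
            nlinarith [sq_abs (α i)]
        _ = p := by simp
    exact Real.sqrt_le_sqrt hsum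
  calc ‖ch + mvE Gh α‖ ≤ ‖ch‖ + ‖mvE Gh α‖ := norm_add_le _ _
    _ ≤ ‖ch‖ + entSum Gh * Real.sqrt p := by
        have h1 := norm_mvE_le Gh α
        have h2 := mul_le_mul_of_nonneg_left hαn (entSum_nonneg Gh)
        linarith

end AuxLemmas

/-- the homogeneous error `ε_hom(Δt)` tends to 0 and is `O(Δt)`. -/
theorem ehom_limit_and_order {n p : ℕ} (A : Matrix (Fin n) (Fin n) ℝ)
    (η : ℕ) (hη : 1 ≤ η) (ch : EuclideanSpace ℝ (Fin n))
    (Gh : Matrix (Fin n) (Fin p) ℝ) (utld : EuclideanSpace ℝ (Fin n)) :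
    Filter.Tendsto (fun dt => ehom A η ch Gh utld dt)
      (nhdsWithin 0 (Set.Ioi 0)) (nhds 0) ∧
    ∃ c > (0 : ℝ), ∃ δ > (0 : ℝ), ∀ dt ∈ Set.Ioo (0 : ℝ) δ,
      ehom A η ch Gh utld dt ≤ c * dt := by
  classical
  have ha0 : 0 ≤ entSum A := entSum_nonneg A
  set b : ℝ := 1 + entSum A with hb
  have hb1 : (1 : ℝ) ≤ b := by simp only [hb]; linarith
  have hb0 : (0 : ℝ) ≤ b := by linarith
  set Eb : ℝ := ∑' k, b ^ k / (k.factorial : ℝ) with hEbdef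
  have hEb0 : 0 ≤ Eb :=
    tsum_nonneg fun k => div_nonneg (pow_nonneg hb0 k) (by positivity)
  set n2 : ℝ := (n : ℝ) * n with hn2
  have hn20 : 0 ≤ n2 := by positivity
  have hentA : ∀ i : ℕ, entSum (A ^ i) ≤ n2 * b ^ i := fun i =>
    entSum_le_of_bound _ (fun i' j' => abs_entry_pow_le A i i' j')
  set Ci : ℕ → ℝ := fun i =>
    |((i : ℝ) ^ (-(i : ℝ) / ((i : ℝ) - 1)) - (i : ℝ) ^ (-(1 : ℝ) / ((i : ℝ) - 1)))| with hCi
  set K : ℝ := (∑ i ∈ Finset.Icc 2 (η + 1), Ci i / (i.factorial : ℝ) * (n2 * b ^ i))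
    + n2 * Eb with hK
  have hterm0 : ∀ i : ℕ, 0 ≤ Ci i / (i.factorial : ℝ) * (n2 * b ^ i) := by
    intro i
    have h1 : (0:ℝ) ≤ Ci i := abs_nonneg _
    have h2 : (0:ℝ) ≤ b ^ i := pow_nonneg hb0 i
    have h3 : (0:ℝ) < (i.factorial : ℝ) := by positivity
    have := mul_nonneg hn20 h2
    positivity
  have hK0 : 0 ≤ K := by
    have h1 := Finset.sum_nonneg (fun i (_ : i ∈ Finset.Icc 2 (η+1)) => hterm0 i)
    have h2 := mul_nonneg hn20 hEb0
    simp only [hK]; linarith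
  set rH : ℝ := ‖ch‖ + entSum Gh * Real.sqrt p with hrH
  have hrH0 : 0 ≤ rH := by
    have h1 := mul_nonneg (entSum_nonneg Gh) (Real.sqrt_nonneg (p : ℝ))
    have h2 := norm_nonneg ch
    simp only [hrH]; linarith
  set C0 : ℝ := 2 * Real.sqrt n * (K * (rH + ‖utld‖))
    + Real.sqrt p * (n2 * Eb * entSum Gh) with hC0
  have hC00 : 0 ≤ C0 := by
    have h1 : 0 ≤ K * (rH + ‖utld‖) :=
      mul_nonneg hK0 (by have := norm_nonneg utld; linarith)
    have h2 : 0 ≤ n2 * Eb * entSum Gh :=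
      mul_nonneg (mul_nonneg hn20 hEb0) (entSum_nonneg Gh)
    have h3 := Real.sqrt_nonneg (n : ℝ)
    have h4 := Real.sqrt_nonneg (p : ℝ)
    simp only [hC0]; nlinarith
  -- main bound
  have main : ∀ dt ∈ Set.Ioo (0 : ℝ) 1, ehom A η ch Gh utld dt ≤ C0 * dt := by
    rintro dt ⟨hdt0, hdt1'⟩
    have hdt1 : dt ≤ 1 := le_of_lt hdt1'
    -- bound on |τ i|
    have hτb : ∀ (τi : ℝ) (i : ℕ), 1 ≤ i → τi ∈ Iint i dt → |τi| ≤ Ci i * dt := by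
      intro τi i hi hmem
      obtain ⟨hl, hr⟩ := hmem
      have hdti : dt ^ i ≤ dt := by
        calc dt ^ i ≤ dt ^ 1 := pow_le_pow_of_le_one hdt0.le hdt1 hi
          _ = dt := pow_one dt
      have h1 : |τi| ≤ Ci i * dt ^ i := by
        have h3 : |τi| = -τi := abs_of_nonpos hr
        have h4 : -(((i : ℝ) ^ (-(i : ℝ) / ((i : ℝ) - 1))
            - (i : ℝ) ^ (-(1 : ℝ) / ((i : ℝ) - 1))) * dt ^ i)
            ≤ |((i : ℝ) ^ (-(i : ℝ) / ((i : ℝ) - 1))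
            - (i : ℝ) ^ (-(1 : ℝ) / ((i : ℝ) - 1))) * dt ^ i| := neg_le_abs _
        have h5 : |((i : ℝ) ^ (-(i : ℝ) / ((i : ℝ) - 1))
            - (i : ℝ) ^ (-(1 : ℝ) / ((i : ℝ) - 1))) * dt ^ i| = Ci i * dt ^ i := by
          rw [abs_mul, abs_of_nonneg (pow_nonneg hdt0.le i)]
        rw [h3]; rw [h5] at h4; linarith
      exact h1.trans (mul_le_mul_of_nonneg_left hdti (abs_nonneg _))
    -- bound on R (entrywise dominated by Eexp)
    have hRb : ∀ R : Matrix (Fin n) (Fin n) ℝ, (∀ i j, |R i j| ≤ Eexp A dt η i j) →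
        entSum R ≤ n2 * (dt * Eb) := by
      intro R hR
      refine entSum_le_of_bound _ fun i j => ?_
      exact (hR i j).trans ((le_abs_self _).trans (Eexp_entry_abs_le A hdt0 hdt1 η i j))
    -- bound on members of Fx
    have hFxBound : ∀ M ∈ Fx A η dt, entSum M ≤ dt * K := by
      rintro M ⟨τ, hτ, R, hR, rfl⟩
      set S := ∑ i ∈ Finset.Icc 2 η, (τ i / (Nat.factorial i : ℝ)) • A ^ i with hSdef
      have hS : entSum S
          ≤ dt * ∑ i ∈ Finset.Icc 2 (η + 1), Ci i / (i.factorial : ℝ) * (n2 * b ^ i) := by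
        calc entSum S ≤ ∑ i ∈ Finset.Icc 2 η, entSum ((τ i / (Nat.factorial i : ℝ)) • A ^ i) :=
              entSum_finsum_le _ _
          _ ≤ ∑ i ∈ Finset.Icc 2 η, dt * (Ci i / (i.factorial : ℝ) * (n2 * b ^ i)) := by
              refine Finset.sum_le_sum fun i hi => ?_
              have hi2 : 2 ≤ i := (Finset.mem_Icc.mp hi).1
              rw [entSum_smul, abs_div, Nat.abs_cast]
              have hτi := hτb (τ i) i (by omega) (hτ i hi)
              have hfac : (0:ℝ) < (i.factorial : ℝ) := by positivity
              have h1 : |τ i| / (i.factorial : ℝ) ≤ (Ci i * dt) / (i.factorial : ℝ) := by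
                gcongr
              have h6 : (0:ℝ) ≤ (Ci i * dt) / (i.factorial : ℝ) :=
                div_nonneg (mul_nonneg (abs_nonneg _) hdt0.le) hfac.le
              calc |τ i| / (i.factorial : ℝ) * entSum (A ^ i)
                  ≤ (Ci i * dt) / (i.factorial : ℝ) * (n2 * b ^ i) :=
                    mul_le_mul h1 (hentA i) (entSum_nonneg _) h6
                _ = dt * (Ci i / (i.factorial : ℝ) * (n2 * b ^ i)) := by ring
          _ ≤ dt * ∑ i ∈ Finset.Icc 2 (η + 1), Ci i / (i.factorial : ℝ) * (n2 * b ^ i) := by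
              rw [← Finset.mul_sum]
              refine mul_le_mul_of_nonneg_left ?_ hdt0.le
              refine Finset.sum_le_sum_of_subset_of_nonneg ?_ (fun i _ _ => hterm0 i)
              exact Finset.Icc_subset_Icc le_rfl (by omega)
      have hR2 := hRb R hR
      calc entSum (S + R) ≤ entSum S + entSum R := entSum_add_le _ _
        _ ≤ dt * ∑ i ∈ Finset.Icc 2 (η + 1), Ci i / (i.factorial : ℝ) * (n2 * b ^ i)
            + n2 * (dt * Eb) := add_le_add hS hR2
        _ = dt * K := by rw [hK]; ring
    -- bound on members of Fu
    have hFuBound : ∀ N ∈ Fu A η dt, entSum N ≤ dt * K := by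
      rintro N ⟨τ, hτ, R, hR, rfl⟩
      set S := ∑ i ∈ Finset.Icc 2 (η + 1), (τ i / (Nat.factorial i : ℝ)) • A ^ (i - 1)
        with hSdef
      have hS : entSum S
          ≤ dt * ∑ i ∈ Finset.Icc 2 (η + 1), Ci i / (i.factorial : ℝ) * (n2 * b ^ i) := by
        calc entSum S
            ≤ ∑ i ∈ Finset.Icc 2 (η + 1), entSum ((τ i / (Nat.factorial i : ℝ)) • A ^ (i - 1)) :=
              entSum_finsum_le _ _
          _ ≤ ∑ i ∈ Finset.Icc 2 (η + 1), dt * (Ci i / (i.factorial : ℝ) * (n2 * b ^ i)) := by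
              refine Finset.sum_le_sum fun i hi => ?_
              have hi2 : 2 ≤ i := (Finset.mem_Icc.mp hi).1
              rw [entSum_smul, abs_div, Nat.abs_cast]
              have hτi := hτb (τ i) i (by omega) (hτ i hi)
              have hfac : (0:ℝ) < (i.factorial : ℝ) := by positivity
              have h1 : |τ i| / (i.factorial : ℝ) ≤ (Ci i * dt) / (i.factorial : ℝ) := by
                gcongr
              have h6 : (0:ℝ) ≤ (Ci i * dt) / (i.factorial : ℝ) :=
                div_nonneg (mul_nonneg (abs_nonneg _) hdt0.le) hfac.le
              have hpow : entSum (A ^ (i - 1)) ≤ n2 * b ^ i := by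
                refine (hentA (i - 1)).trans ?_
                refine mul_le_mul_of_nonneg_left ?_ hn20
                exact pow_le_pow_right₀ hb1 (by omega)
              calc |τ i| / (i.factorial : ℝ) * entSum (A ^ (i - 1))
                  ≤ (Ci i * dt) / (i.factorial : ℝ) * (n2 * b ^ i) :=
                    mul_le_mul h1 hpow (entSum_nonneg _) h6
                _ = dt * (Ci i / (i.factorial : ℝ) * (n2 * b ^ i)) := by ring
          _ ≤ dt * ∑ i ∈ Finset.Icc 2 (η + 1), Ci i / (i.factorial : ℝ) * (n2 * b ^ i) := by
              rw [← Finset.mul_sum]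
      have hR2 : entSum (dt • R) ≤ n2 * (dt * Eb) := by
        rw [entSum_smul, abs_of_nonneg hdt0.le]
        have h1 := hRb R hR
        have h2 : dt * entSum R ≤ 1 * entSum R :=
          mul_le_mul_of_nonneg_right hdt1 (entSum_nonneg R)
        have h3 : (1:ℝ) * entSum R = entSum R := one_mul _
        linarith
      calc entSum (S + dt • R) ≤ entSum S + entSum (dt • R) := entSum_add_le _ _
        _ ≤ dt * ∑ i ∈ Finset.Icc 2 (η + 1), Ci i / (i.factorial : ℝ) * (n2 * b ^ i)
            + n2 * (dt * Eb) := add_le_add hS hR2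
        _ = dt * K := by rw [hK]; ring
    -- bound on members of Cset
    have hCsetBound : ∀ y ∈ Cset A η dt ch Gh utld, ‖y‖ ≤ dt * (K * (rH + ‖utld‖)) := by
      rintro y ⟨M, hM, N, hN, x, hx, rfl⟩
      have hxB : ‖x‖ ≤ rH := zono_norm_le ch Gh hx
      have hMx : ‖mvE M x‖ ≤ dt * K * rH := by
        refine (norm_mvE_le M x).trans ?_
        exact mul_le_mul (hFxBound M hM) hxB (norm_nonneg x)
          (mul_nonneg hdt0.le hK0)
      have hNu : ‖mvE N utld‖ ≤ dt * K * ‖utld‖ := by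
        refine (norm_mvE_le N utld).trans ?_
        exact mul_le_mul_of_nonneg_right (hFuBound N hN) (norm_nonneg utld)
      calc ‖mvE M x + mvE N utld‖ ≤ ‖mvE M x‖ + ‖mvE N utld‖ := norm_add_le _ _
        _ ≤ dt * K * rH + dt * K * ‖utld‖ := add_le_add hMx hNu
        _ = dt * (K * (rH + ‖utld‖)) := by ring
    have herr : err (Cset A η dt ch Gh utld) ≤ Real.sqrt n * (dt * (K * (rH + ‖utld‖))) := by
      refine err_le_of_bound _ ?_ hCsetBound
      have : 0 ≤ K * (rH + ‖utld‖) := mul_nonneg hK0 (by have := norm_nonneg utld; linarith)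
      positivity
    have hE1 : entSum (mexp (dt • A) - 1) ≤ n2 * (dt * Eb) :=
      entSum_le_of_bound _ (fun i j => mexp_sub_one_entry_abs_le A hdt0 hdt1 i j)
    have hspec : specNorm ((mexp (dt • A) - 1) * Gh) ≤ n2 * (dt * Eb) * entSum Gh := by
      refine (specNorm_le_entSum _).trans ((entSum_mul_le _ _).trans ?_)
      exact mul_le_mul_of_nonneg_right hE1 (entSum_nonneg Gh)
    have hfinal : ehom A η ch Gh utld dt
        ≤ 2 * (Real.sqrt n * (dt * (K * (rH + ‖utld‖))))
          + Real.sqrt p * (n2 * (dt * Eb) * entSum Gh) := by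
      rw [ehom]
      refine add_le_add ?_ ?_
      · linarith [herr]
      · exact mul_le_mul_of_nonneg_left hspec (Real.sqrt_nonneg _)
    refine hfinal.trans (le_of_eq ?_)
    rw [hC0]; ring
  have hnonneg : ∀ dt : ℝ, 0 ≤ ehom A η ch Gh utld dt := by
    intro dt
    rw [ehom]
    have h1 := err_nonneg (Cset A η dt ch Gh utld)
    have h2 : 0 ≤ specNorm ((mexp (dt • A) - 1) * Gh) := norm_nonneg _
    have h3 := Real.sqrt_nonneg (p : ℝ)
    nlinarith
  constructor
  · -- tendsto
    have hmem : Set.Ioo (0 : ℝ) 1 ∈ nhdsWithin 0 (Set.Ioi 0) :=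
      Ioo_mem_nhdsGT_of_mem (by constructor <;> norm_num)
    refine squeeze_zero' (g := fun dt => C0 * dt) (Filter.Eventually.of_forall fun dt => hnonneg dt) ?_ ?_
    · filter_upwards [hmem] with dt hdt
      exact main dt hdt
    · have h1 : Filter.Tendsto (fun dt : ℝ => C0 * dt) (nhds 0) (nhds (C0 * 0)) :=
        (continuous_const.mul continuous_id).tendsto 0
      rw [mul_zero] at h1
      exact h1.mono_left nhdsWithin_le_nhds
  · refine ⟨C0 + 1, by linarith, 1, by norm_num, fun dt hdt => ?_⟩
    have h1 := main dt hdt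
    have h2 : C0 * dt ≤ (C0 + 1) * dt := by nlinarith [hdt.1]
    linarith
end

section
/- Let Z = {c + G·α : α ∈ [-1,1]^p} ⊆ ℝ^n be a zonotope and let P = conv{v_1, …, v_s} ⊆ ℝ^n be the convex hull of finitely many points v_1, …, v_s (s ≥ 1). Then the Minkowski difference Z ⊖ P = {x ∈ ℝ^n : ∀ y ∈ P, x + y ∈ Z} equals the constrained zonotope { (c − v_1) + G·α¹ : α¹ ∈ [-1,1]^p and there exist α², …, α^s ∈ [-1,1]^p such that G·α¹ − G·α^j = v_1 − v_j for all j ∈ {2,…,s} }. -/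
open scoped Pointwise

private lemma mvE_comb {n p : ℕ} (G : Matrix (Fin n) (Fin p) ℝ) (a b : ℝ)
    (x y : EuclideanSpace ℝ (Fin p)) :
    mvE G (a • x + b • y) = a • mvE G x + b • mvE G y := by
  simp [mvE, map_add, map_smul]

/-- the Minkowski difference of a zonotope and a polytope in vertex
representation is a constrained zonotope. -/
theorem minkowski_diff_zono_polytope {n p s : ℕ} (hs : 1 ≤ s)
    (c : EuclideanSpace ℝ (Fin n)) (G : Matrix (Fin n) (Fin p) ℝ)
    (v : Fin s → EuclideanSpace ℝ (Fin n)) :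
    {x : EuclideanSpace ℝ (Fin n) |
        ∀ y ∈ convexHull ℝ (Set.range v), x + y ∈ zono c G} =
      {x : EuclideanSpace ℝ (Fin n) | ∃ α : Fin s → EuclideanSpace ℝ (Fin p),
        (∀ j i, α j i ∈ Set.Icc (-1 : ℝ) 1) ∧
        (∀ j, mvE G (α ⟨0, hs⟩) - mvE G (α j) = v ⟨0, hs⟩ - v j) ∧
        x = (c - v ⟨0, hs⟩) + mvE G (α ⟨0, hs⟩)} := by
  ext x
  simp only [Set.mem_setOf_eq]
  constructor
  · intro hx
    choose α hα hxα using fun j => hx (v j) (subset_convexHull ℝ _ (Set.mem_range_self j))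
    refine ⟨α, hα, fun j => ?_, ?_⟩
    · have h0 := hxα ⟨0, hs⟩
      have hj := hxα j
      have e0 : mvE G (α ⟨0, hs⟩) = x + v ⟨0, hs⟩ - c := by rw [h0]; abel
      have ej : mvE G (α j) = x + v j - c := by rw [hj]; abel
      rw [e0, ej]; abel
    · have h0 := hxα ⟨0, hs⟩
      have : (c - v ⟨0, hs⟩) + mvE G (α ⟨0, hs⟩) = (c + mvE G (α ⟨0, hs⟩)) - v ⟨0, hs⟩ := by
        abel
      rw [this, ← h0]; abel
  · rintro ⟨α, hα, hdiff, rfl⟩ y hy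
    set x := (c - v ⟨0, hs⟩) + mvE G (α ⟨0, hs⟩) with hxdef
    have hmem : ∀ j, x + v j ∈ zono c G := by
      intro j
      refine ⟨α j, hα j, ?_⟩
      have := hdiff j
      have : mvE G (α j) = mvE G (α ⟨0, hs⟩) - (v ⟨0, hs⟩ - v j) := by
        rw [← this]; abel
      rw [hxdef, this]; abel
    have hconv : Convex ℝ {y : EuclideanSpace ℝ (Fin n) | x + y ∈ zono c G} := by
      rintro y1 ⟨β, hβ, hβe⟩ y2 ⟨γ, hγ, hγe⟩ a b ha hb hab
      refine ⟨a • β + b • γ, fun i => ?_, ?_⟩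
      · have h1 := hβ i
        have h2 := hγ i
        simp only [Set.mem_Icc] at h1 h2 ⊢
        have : (a • β + b • γ) i = a * β i + b * γ i := by
          simp [PiLp.add_apply, PiLp.smul_apply, smul_eq_mul]
        rw [this]
        constructor <;> nlinarith [h1.1, h1.2, h2.1, h2.2]
      · have : x + (a • y1 + b • y2) = a • (x + y1) + b • (x + y2) := by
          have h : a • (x + y1) + b • (x + y2) = (a + b) • x + (a • y1 + b • y2) := by
            module
          rw [h, hab, one_smul]
        rw [this, hβe, hγe, mvE_comb]
        have : a • (c + mvE G β) + b • (c + mvE G γ)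
            = (a + b) • c + (a • mvE G β + b • mvE G γ) := by module
        rw [this, hab, one_smul]
    have hsub : convexHull ℝ (Set.range v) ⊆ {y | x + y ∈ zono c G} :=
      convexHull_min (by rintro _ ⟨j, rfl⟩; exact hmem j) hconv
    exact hsub hy
end
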